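/- Let A, B, C be affinely independent points of the Euclidean plane forming a triangle that is obtuse at B, i.e., ⟪A−B, C−B⟫ < 0, and let H be the orthocenter of triangle ABC. Then A, H, C are affinely independent, the triangle AHC is acute (all three of ⟪H−A, C−A⟫, ⟪A−H, C−H⟫, ⟪A−C, H−C⟫ are positive), and the orthocenter of triangle AHC is B. -/

import Mathlib

noncomputable section

lemma affInd_iff_cross (P Q R : ℝ × ℝ) :
    AffineIndependent ℝ ![P, Q, R] ↔
      (Q.1 - P.1) * (R.2 - P.2) - (Q.2 - P.2) * (R.1 - P.1) ≠ 0 := by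
  rw [affineIndependent_iff_not_collinear_set,
    collinear_iff_of_mem (Set.mem_insert P {Q, R})]
  rw [not_iff_comm, not_not]
  constructor
  · rintro h
    by_cases hu : Q = P
    · refine ⟨R - P, ?_⟩
      rintro p (rfl | rfl | rfl)
      · exact ⟨0, by simp⟩
      · exact ⟨0, by simp [hu]⟩
      · exact ⟨1, by simp⟩
    · refine ⟨Q - P, ?_⟩
      have hne : (Q.1 - P.1)^2 + (Q.2 - P.2)^2 ≠ 0 := by
        intro h0
        apply hu
        have h1 : Q.1 = P.1 := by nlinarith [sq_nonneg (Q.1 - P.1), sq_nonneg (Q.2 - P.2)]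
        have h2 : Q.2 = P.2 := by nlinarith [sq_nonneg (Q.1 - P.1), sq_nonneg (Q.2 - P.2)]
        exact Prod.ext h1 h2
      rintro p (rfl | rfl | rfl)
      · exact ⟨0, by simp⟩
      · exact ⟨1, by simp⟩
      · refine ⟨((p.1 - P.1) * (Q.1 - P.1) + (p.2 - P.2) * (Q.2 - P.2)) /
          ((Q.1 - P.1)^2 + (Q.2 - P.2)^2), ?_⟩
        have e1 : p.1 = ((p.1 - P.1) * (Q.1 - P.1) + (p.2 - P.2) * (Q.2 - P.2)) /
            ((Q.1 - P.1)^2 + (Q.2 - P.2)^2) * (Q.1 - P.1) + P.1 := by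
          field_simp
          linear_combination (-(Q.2 - P.2)) * h
        have e2 : p.2 = ((p.1 - P.1) * (Q.1 - P.1) + (p.2 - P.2) * (Q.2 - P.2)) /
            ((Q.1 - P.1)^2 + (Q.2 - P.2)^2) * (Q.2 - P.2) + P.2 := by
          field_simp
          linear_combination (Q.1 - P.1) * h
        refine Prod.ext ?_ ?_
        · simpa using e1
        · simpa using e2
  · rintro ⟨v, hv⟩
    obtain ⟨rQ, hQ⟩ := hv Q (by simp)
    obtain ⟨rR, hR⟩ := hv R (by simp)
    have hQ1 : Q.1 = rQ * v.1 + P.1 := by rw [hQ]; simp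
    have hQ2 : Q.2 = rQ * v.2 + P.2 := by rw [hQ]; simp
    have hR1 : R.1 = rR * v.1 + P.1 := by rw [hR]; simp
    have hR2 : R.2 = rR * v.2 + P.2 := by rw [hR]; simp
    rw [hQ1, hQ2, hR1, hR2]; ring


/-- The standard inner product on `ℝ²`. -/
def dot (p q : ℝ × ℝ) : ℝ := p.1 * q.1 + p.2 * q.2

/-- The Euclidean length of a vector of `ℝ²`. -/
def elen (p : ℝ × ℝ) : ℝ := Real.sqrt (dot p p)

/-- The orthogonal projection of the point `P` onto the line through `A` and `B`. -/
def projLine (P A B : ℝ × ℝ) : ℝ × ℝ :=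
  A + (dot (P - A) (B - A) / dot (B - A) (B - A)) • (B - A)

/-- The incenter of the triangle `V₁V₂V₃`: the weighted average of the vertices,
each weighted by the length of the opposite side. -/
def incenter (V₁ V₂ V₃ : ℝ × ℝ) : ℝ × ℝ :=
  (elen (V₂ - V₃) + elen (V₁ - V₃) + elen (V₁ - V₂))⁻¹ •
    (elen (V₂ - V₃) • V₁ + elen (V₁ - V₃) • V₂ + elen (V₁ - V₂) • V₃)

/-- `H` is the orthocenter of the triangle `ABC`. -/
def IsOrthocenter (A B C H : ℝ × ℝ) : Prop :=
  dot (H - A) (B - C) = 0 ∧ dot (H - B) (A - C) = 0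

/-- For a triangle `ABC` obtuse at `B` with orthocenter `H`, the points
`A, H, C` are affinely independent, the triangle `AHC` is acute, and the
orthocenter of `AHC` is `B`. -/
theorem stmt_9 (A B C H : ℝ × ℝ)
    (hind : AffineIndependent ℝ ![A, B, C])
    (hB : dot (A - B) (C - B) < 0)
    (hH : IsOrthocenter A B C H) :
    AffineIndependent ℝ ![A, H, C] ∧
    0 < dot (H - A) (C - A) ∧
    0 < dot (A - H) (C - H) ∧
    0 < dot (A - C) (H - C) ∧
    IsOrthocenter A H C B := by
  obtain ⟨hH1, hH2⟩ := hH
  simp only [IsOrthocenter, dot, Prod.fst_sub, Prod.snd_sub] at hH1 hH2 hB ⊢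
  rw [affInd_iff_cross] at hind
  rw [affInd_iff_cross]
  set a1 := A.1; set a2 := A.2; set b1 := B.1; set b2 := B.2
  set c1 := C.1; set c2 := C.2; set h1 := H.1; set h2 := H.2
  set d : ℝ := (b1 - a1) * (c2 - a2) - (b2 - a2) * (c1 - a1) with hd_def
  set dA : ℝ := (b1 - a1) * (c1 - a1) + (b2 - a2) * (c2 - a2) with hdA_def
  set dB : ℝ := (a1 - b1) * (c1 - b1) + (a2 - b2) * (c2 - b2) with hdB_def
  set dC : ℝ := (a1 - c1) * (b1 - c1) + (a2 - c2) * (b2 - c2) with hdC_def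
  have hdA : 0 < dA := by nlinarith [sq_nonneg (b1 - a1), sq_nonneg (b2 - a2)]
  have hdC : 0 < dC := by nlinarith [sq_nonneg (b1 - c1), sq_nonneg (b2 - c2)]
  have key1 : d * (h1 - a1) = dA * (c2 - b2) := by
    linear_combination (c2 - a2) * hH1 + (b2 - c2) * hH2
  have key2 : d * (h2 - a2) = dA * (b1 - c1) := by
    linear_combination (-(c1 - a1)) * hH1 + (c1 - b1) * hH2
  have hd2 : (0:ℝ) < d ^ 2 := lt_of_le_of_ne (sq_nonneg d) (Ne.symm (pow_ne_zero 2 hind))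
  have keyc : d * ((h1 - a1) * (c2 - a2) - (h2 - a2) * (c1 - a1)) = dA * dC := by
    linear_combination (c2 - a2) * key1 - (c1 - a1) * key2
  have eq1 : (h1 - a1) * (c1 - a1) + (h2 - a2) * (c2 - a2) = dA := by
    linear_combination -hH2
  have eq3 : (a1 - c1) * (h1 - c1) + (a2 - c2) * (h2 - c2) = dC := by
    linear_combination hH2
  have key3 : d ^ 2 * ((a1 - h1) * (c1 - h1) + (a2 - h2) * (c2 - h2)) = -(dA * dB * dC) := by
    linear_combination (d * (h1 - a1) + dA * (c2 - b2)) * key1 +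
      (d * (h2 - a2) + dA * (b1 - c1)) * key2 + d ^ 2 * hH2
  refine ⟨?_, by rw [eq1]; exact hdA, ?_, by rw [eq3]; exact hdC, ?_, ?_⟩
  · intro hzero
    apply absurd keyc
    rw [hzero, mul_zero]
    exact fun h => (mul_pos hdA hdC).ne' h.symm
  · by_contra hn
    push_neg at hn
    have hnp := mul_nonpos_of_nonneg_of_nonpos hd2.le hn
    linarith [key3, mul_pos (mul_pos hdA hdC) (neg_pos.mpr hB)]
  · linear_combination hH1 - hH2
  · linear_combination -hH2
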